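/- Let m ≥ 2, 0 < γ ≤ m^{−3/2}/16, and ℓ = ⌊1/√(2γ√m)⌋. In the lower-bound construction with classes C₁, C₂ partitioning X, the partition has strong convex hull margin γ: d(conv(C₁), conv(C₂)) ≥ γ · diam(X), where d and diam are Euclidean. -/

import Mathlib

/-- The point `x_i^j = e_i + j • e_m` of the lower-bound construction. -/
noncomputable def xpt (m i j : ℕ) : EuclideanSpace ℝ (Fin m) :=
  WithLp.toLp 2 fun c => (if (c : ℕ) = i then 1 else 0) + (if (c : ℕ) = m - 1 then (j : ℝ) else 0)

lemma xpt_eq (m i j : ℕ) (hm : 1 ≤ m) (hi : i < m) :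
    xpt m i j = EuclideanSpace.single (⟨i, hi⟩ : Fin m) (1:ℝ)
      + (j : ℝ) • EuclideanSpace.single (⟨m-1, by omega⟩ : Fin m) (1:ℝ) := by
  ext c
  simp only [xpt, PiLp.toLp_apply, PiLp.add_apply, PiLp.smul_apply, EuclideanSpace.single_apply, smul_eq_mul,
    mul_ite, mul_one, mul_zero, Fin.ext_iff]

lemma inner_xpt (m i j : ℕ) (hm : 1 ≤ m) (hi : i < m) (v : EuclideanSpace ℝ (Fin m)) :
    (inner ℝ v (xpt m i j) : ℝ) = v ⟨i, hi⟩ + (j : ℝ) * v ⟨m-1, by omega⟩ := by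
  rw [xpt_eq m i j hm hi, inner_add_right, real_inner_smul_right,
    EuclideanSpace.inner_single_right, EuclideanSpace.inner_single_right]
  simp [mul_comm]

set_option maxHeartbeats 1000000 in
theorem stmt11 (m : ℕ) (hm : 2 ≤ m) (γ : ℝ) (hγ : 0 < γ)
    (hγle : γ ≤ (m : ℝ) ^ (-(3:ℝ)/2) / 16)
    (ℓ : ℕ) (hℓdef : ℓ = (⌊1 / Real.sqrt (2 * γ * Real.sqrt m)⌋).toNat)
    (L : ℕ → ℕ) (hL : ∀ i < m - 1, 1 ≤ L i ∧ L i ≤ ℓ) :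
    ENNReal.ofReal (γ * Metric.diam {z : EuclideanSpace ℝ (Fin m) |
        ∃ i j : ℕ, i < m - 1 ∧ 1 ≤ j ∧ j ≤ ℓ ∧ z = xpt m i j}) ≤
      ⨅ a ∈ convexHull ℝ {z : EuclideanSpace ℝ (Fin m) |
          ∃ i j : ℕ, i < m - 1 ∧ 1 ≤ j ∧ j ≤ L i ∧ z = xpt m i j},
        ⨅ b ∈ convexHull ℝ {z : EuclideanSpace ℝ (Fin m) |
          ∃ i j : ℕ, i < m - 1 ∧ L i < j ∧ j ≤ ℓ ∧ z = xpt m i j},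
          ENNReal.ofReal (dist a b) := by
  have hm1 : 1 ≤ m := by omega
  have hmR : (1:ℝ) ≤ m := by exact_mod_cast hm1
  have hsm0 : (0:ℝ) < Real.sqrt m := Real.sqrt_pos.2 (by linarith)
  set t := 2 * γ * Real.sqrt m with htdef
  have ht0 : 0 < t := by positivity
  -- t ≤ 1
  have hrw : Real.sqrt (m:ℝ) * (m:ℝ) ^ (-(3:ℝ)/2) = ((m:ℝ))⁻¹ := by
    rw [Real.sqrt_eq_rpow, ← Real.rpow_add (by linarith)]
    norm_num
    rw [Real.rpow_neg_one]
  have ht1 : t ≤ 1 := by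
    have h1 : t ≤ 2 * ((m : ℝ) ^ (-(3:ℝ)/2) / 16) * Real.sqrt m := by
      rw [htdef]
      apply mul_le_mul_of_nonneg_right _ hsm0.le
      linarith
    have h2 : 2 * ((m : ℝ) ^ (-(3:ℝ)/2) / 16) * Real.sqrt m = (Real.sqrt m * (m:ℝ) ^ (-(3:ℝ)/2)) / 8 := by
      ring
    have h3 : ((m:ℝ))⁻¹ ≤ 1 := by
      rw [inv_le_one_iff₀]; right; exact hmR
    rw [h2, hrw] at h1
    linarith
  have hx1 : (1:ℝ) ≤ 1 / Real.sqrt t := by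
    rw [le_div_iff₀ (Real.sqrt_pos.2 ht0), one_mul]
    exact Real.sqrt_le_one.mpr ht1
  have hℓ1 : 1 ≤ ℓ := by
    rw [hℓdef]
    have : (1:ℤ) ≤ ⌊1 / Real.sqrt t⌋ := Int.le_floor.2 (by exact_mod_cast hx1)
    omega
  have hℓR : (1:ℝ) ≤ (ℓ:ℝ) := by exact_mod_cast hℓ1
  have hℓle : (ℓ:ℝ) ≤ 1 / Real.sqrt t := by
    have h0 : (1:ℤ) ≤ ⌊1 / Real.sqrt t⌋ := Int.le_floor.2 (by exact_mod_cast hx1)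
    rw [hℓdef]
    calc ((⌊1 / Real.sqrt t⌋.toNat : ℕ) : ℝ) = ((⌊1 / Real.sqrt t⌋ : ℤ) : ℝ) := by
          exact_mod_cast congrArg (fun z : ℤ => (z : ℝ)) (Int.toNat_of_nonneg (by omega))
      _ ≤ _ := Int.floor_le _
  have hkey : (ℓ:ℝ)^2 * t ≤ 1 := by
    have h1 : (ℓ:ℝ)^2 ≤ (1/Real.sqrt t)^2 := by
      apply pow_le_pow_left₀ (by positivity) hℓle
    have h2 : (1/Real.sqrt t)^2 = 1/t := by
      rw [div_pow, one_pow, Real.sq_sqrt ht0.le]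
    rw [h2] at h1
    calc (ℓ:ℝ)^2 * t ≤ (1/t) * t := mul_le_mul_of_nonneg_right h1 ht0.le
      _ = 1 := by field_simp
  -- diam bound
  have hdiam : Metric.diam {z : EuclideanSpace ℝ (Fin m) |
      ∃ i j : ℕ, i < m - 1 ∧ 1 ≤ j ∧ j ≤ ℓ ∧ z = xpt m i j} ≤ (ℓ:ℝ) + 1 := by
    apply Metric.diam_le_of_forall_dist_le (by positivity)
    rintro x ⟨i, j, hi, hj1, hj2, rfl⟩ y ⟨i', j', hi', hj1', hj2', rfl⟩
    have hii : i < m := by omega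
    have hii' : i' < m := by omega
    rw [dist_eq_norm, xpt_eq m i j hm1 hii, xpt_eq m i' j' hm1 hii']
    have habs : |(j:ℝ) - (j':ℝ)| ≤ (ℓ:ℝ) - 1 := by
      rw [abs_sub_le_iff]
      have c1 : (1:ℝ) ≤ (j:ℝ) := by exact_mod_cast hj1
      have c2 : (j:ℝ) ≤ (ℓ:ℝ) := by exact_mod_cast hj2
      have c3 : (1:ℝ) ≤ (j':ℝ) := by exact_mod_cast hj1'
      have c4 : (j':ℝ) ≤ (ℓ:ℝ) := by exact_mod_cast hj2'
      constructor <;> linarith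
    calc ‖(EuclideanSpace.single (⟨i, hii⟩ : Fin m) (1:ℝ)
            + (j : ℝ) • EuclideanSpace.single (⟨m-1, by omega⟩ : Fin m) (1:ℝ))
          - (EuclideanSpace.single (⟨i', hii'⟩ : Fin m) (1:ℝ)
            + (j' : ℝ) • EuclideanSpace.single (⟨m-1, by omega⟩ : Fin m) (1:ℝ))‖
        = ‖(EuclideanSpace.single (⟨i, hii⟩ : Fin m) (1:ℝ)
            - EuclideanSpace.single (⟨i', hii'⟩ : Fin m) (1:ℝ))
          + ((j : ℝ) - (j' : ℝ)) • EuclideanSpace.single (⟨m-1, by omega⟩ : Fin m) (1:ℝ)‖ := by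
          congr 1; module
      _ ≤ ‖EuclideanSpace.single (⟨i, hii⟩ : Fin m) (1:ℝ)
            - EuclideanSpace.single (⟨i', hii'⟩ : Fin m) (1:ℝ)‖
          + ‖((j : ℝ) - (j' : ℝ)) • EuclideanSpace.single (⟨m-1, by omega⟩ : Fin m) (1:ℝ)‖ :=
          norm_add_le _ _
      _ ≤ (‖EuclideanSpace.single (⟨i, hii⟩ : Fin m) (1:ℝ)‖
            + ‖EuclideanSpace.single (⟨i', hii'⟩ : Fin m) (1:ℝ)‖)
          + |(j:ℝ) - (j':ℝ)| * ‖EuclideanSpace.single (⟨m-1, by omega⟩ : Fin m) (1:ℝ)‖ := by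
          gcongr
          · exact norm_sub_le _ _
          · rw [norm_smul, Real.norm_eq_abs]
      _ ≤ (1 + 1) + ((ℓ:ℝ) - 1) * 1 := by
          rw [EuclideanSpace.norm_single, EuclideanSpace.norm_single, EuclideanSpace.norm_single]
          norm_num
          exact habs
      _ = (ℓ:ℝ) + 1 := by ring
  -- separating functional
  obtain ⟨v, hv⟩ : ∃ v : EuclideanSpace ℝ (Fin m),
      ∀ c : Fin m, v c = if (c:ℕ) = m - 1 then (1:ℝ) else -(L c) :=
    ⟨WithLp.toLp 2 (fun c => if (c:ℕ) = m - 1 then (1:ℝ) else -(L c)), fun c => rfl⟩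
  have hlin : IsLinearMap ℝ (fun x : EuclideanSpace ℝ (Fin m) => (inner ℝ v x : ℝ)) :=
    ⟨fun x y => inner_add_right _ _ _, fun c x => real_inner_smul_right _ _ _⟩
  have hvm : v ⟨m-1, by omega⟩ = 1 := by rw [hv]; simp
  have hvi : ∀ (i : ℕ) (hi : i < m - 1), v ⟨i, by omega⟩ = -(L i) := by
    intro i hi
    rw [hv]
    norm_num
    omega
  have hvnorm : ‖v‖ ≤ (ℓ:ℝ) * Real.sqrt m := by
    rw [EuclideanSpace.norm_eq]
    have hb : ∀ c : Fin m, ‖v c‖^2 ≤ (ℓ:ℝ)^2 := by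
      intro c
      by_cases hc : (c:ℕ) = m - 1
      · rw [hv, if_pos hc, norm_one, one_pow]
        nlinarith
      · rw [hv, if_neg hc, norm_neg, Real.norm_eq_abs, sq_abs]
        have hcL : (L c : ℝ) ≤ (ℓ:ℝ) := by
          exact_mod_cast (hL c (by have := c.isLt; omega)).2
        have : (0:ℝ) ≤ (L c : ℝ) := by positivity
        nlinarith
    calc Real.sqrt (∑ c : Fin m, ‖v c‖^2) ≤ Real.sqrt (∑ _c : Fin m, (ℓ:ℝ)^2) :=
          Real.sqrt_le_sqrt (Finset.sum_le_sum fun c _ => hb c)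
      _ = Real.sqrt ((ℓ:ℝ)^2 * m) := by
          rw [Finset.sum_const, Finset.card_univ, Fintype.card_fin, nsmul_eq_mul, mul_comm]
      _ = (ℓ:ℝ) * Real.sqrt m := by
          rw [Real.sqrt_mul (by positivity), Real.sqrt_sq (by positivity)]
  refine le_iInf₂ fun a ha => le_iInf₂ fun b hb => ?_
  apply ENNReal.ofReal_le_ofReal
  -- inner bounds
  have hva : (inner ℝ v a : ℝ) ≤ 0 := by
    refine convexHull_min ?_ (convex_halfSpace_le hlin 0) ha
    rintro z ⟨i, j, hi, hj1, hj2, rfl⟩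
    have hii : i < m := by omega
    simp only [Set.mem_setOf_eq]
    rw [inner_xpt m i j hm1 hii, hvi i hi, hvm]
    have : (j:ℝ) ≤ (L i : ℝ) := by exact_mod_cast hj2
    linarith
  have hvb : (1:ℝ) ≤ (inner ℝ v b : ℝ) := by
    refine convexHull_min ?_ (convex_halfSpace_ge hlin 1) hb
    rintro z ⟨i, j, hi, hj1, hj2, rfl⟩
    have hii : i < m := by omega
    simp only [Set.mem_setOf_eq]
    rw [inner_xpt m i j hm1 hii, hvi i hi, hvm]
    have : (L i : ℝ) + 1 ≤ (j:ℝ) := by exact_mod_cast hj1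
    linarith
  have hip : (1:ℝ) ≤ (inner ℝ v (b - a) : ℝ) := by
    rw [inner_sub_right]; linarith
  have hcs : (inner ℝ v (b - a) : ℝ) ≤ ‖v‖ * ‖b - a‖ := real_inner_le_norm _ _
  have h1 : (1:ℝ) ≤ ((ℓ:ℝ) * Real.sqrt m) * ‖b - a‖ := by
    calc (1:ℝ) ≤ ‖v‖ * ‖b - a‖ := le_trans hip hcs
      _ ≤ ((ℓ:ℝ) * Real.sqrt m) * ‖b - a‖ :=
          mul_le_mul_of_nonneg_right hvnorm (norm_nonneg _)
  have hd : dist a b = ‖b - a‖ := by rw [dist_eq_norm, norm_sub_rev]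
  have h2 : γ * ((ℓ:ℝ) + 1) * ((ℓ:ℝ) * Real.sqrt m) ≤ 1 := by
    have hA : (0:ℝ) ≤ γ * Real.sqrt m := by positivity
    have hll : ((ℓ:ℝ) + 1) * (ℓ:ℝ) ≤ 2 * (ℓ:ℝ)^2 := by nlinarith
    calc γ * ((ℓ:ℝ) + 1) * ((ℓ:ℝ) * Real.sqrt m)
        = (γ * Real.sqrt m) * (((ℓ:ℝ) + 1) * (ℓ:ℝ)) := by ring
      _ ≤ (γ * Real.sqrt m) * (2 * (ℓ:ℝ)^2) := mul_le_mul_of_nonneg_left hll hA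
      _ = (ℓ:ℝ)^2 * (2 * γ * Real.sqrt m) := by ring
      _ ≤ 1 := hkey
  have h3 : γ * ((ℓ:ℝ) + 1) ≤ ‖b - a‖ := by
    have hs : (0:ℝ) < (ℓ:ℝ) * Real.sqrt m := by positivity
    refine le_of_mul_le_mul_right ?_ hs
    calc γ * ((ℓ:ℝ) + 1) * ((ℓ:ℝ) * Real.sqrt m) ≤ 1 := h2
      _ ≤ ((ℓ:ℝ) * Real.sqrt m) * ‖b - a‖ := h1
      _ = ‖b - a‖ * ((ℓ:ℝ) * Real.sqrt m) := mul_comm _ _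
  refine le_trans (mul_le_mul_of_nonneg_left hdiam hγ.le) ?_
  rw [hd]
  exact h3
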